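/- Assume: (i) ‖∇L(Θ*)‖_{∞,∞} ≤ λ/2; (ii) |S_j| ≤ s for every 1 ≤ j ≤ d; (iii) there is ν > 0 such that for every j and every u ∈ ℝ^m with ∑_{i ∉ S_j}|u_i| ≤ 3 ∑_{i ∈ S_j}|u_i|, one has uᵀ ((1/T) Xᵀ X) u ≥ ν ‖u‖₂². Then every global minimizer Θ̂ of Θ ↦ L(Θ) + λ‖Θ‖_{1,1} over ℝ^{m×d} satisfies ‖Θ̂_{·,j} − Θ*_{·,j}‖₂ ≤ 6 √s λ / ν for every 1 ≤ j ≤ d, and consequently ‖Θ̂ − Θ*‖_F ≤ 6 √(s d) λ / ν. -/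

import Mathlib

open Matrix Finset

/-- Deterministic error bounds for the regularized LSE: under the gradient bound,
support-size bound `s`, and a restricted eigenvalue condition with constant `ν > 0`,
every global minimizer `Θ̂` of `Θ ↦ L(Θ) + λ‖Θ‖_{1,1}` satisfies
`‖Θ̂_{·,j} − Θ*_{·,j}‖₂ ≤ 6√s λ/ν` for every column `j`, and
`‖Θ̂ − Θ*‖_F ≤ 6√(sd) λ/ν`. -/
theorem regularized_lse_upper_bound (T m d s : ℕ) (hT : 0 < T) (hm : 0 < m) (hd : 0 < d)
    (hs : 0 < s)
    (Y : Matrix (Fin T) (Fin d) ℝ) (X : Matrix (Fin T) (Fin m) ℝ)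
    (lam : ℝ) (hlam : 0 < lam) (ν : ℝ) (hν : 0 < ν)
    (Θstar Θhat : Matrix (Fin m) (Fin d) ℝ)
    (hgrad : ∀ (i : Fin m) (j : Fin d),
      |((1 / (T : ℝ)) • (Xᵀ * (X * Θstar - Y))) i j| ≤ lam / 2)
    (hsupp : ∀ j : Fin d,
      (Finset.univ.filter (fun i : Fin m => Θstar i j ≠ 0)).card ≤ s)
    (hre : ∀ (j : Fin d) (u : Fin m → ℝ),
      (∑ i ∈ Finset.univ.filter (fun i : Fin m => Θstar i j = 0), |u i|
          ≤ 3 * ∑ i ∈ Finset.univ.filter (fun i : Fin m => Θstar i j ≠ 0), |u i|) →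
      ν * ∑ i, u i ^ 2 ≤ u ⬝ᵥ ((1 / (T : ℝ)) • (Xᵀ * X)).mulVec u)
    (hmin : ∀ Θ : Matrix (Fin m) (Fin d) ℝ,
      (1 / (2 * (T : ℝ))) * (∑ t, ∑ j, (Y t j - (X * Θhat) t j) ^ 2)
          + lam * ∑ i, ∑ j, |Θhat i j|
        ≤ (1 / (2 * (T : ℝ))) * (∑ t, ∑ j, (Y t j - (X * Θ) t j) ^ 2)
          + lam * ∑ i, ∑ j, |Θ i j|) :
    (∀ j : Fin d,
      Real.sqrt (∑ i, (Θhat i j - Θstar i j) ^ 2) ≤ 6 * Real.sqrt s * lam / ν) ∧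
    Real.sqrt (∑ i, ∑ j, (Θhat i j - Θstar i j) ^ 2)
      ≤ 6 * Real.sqrt ((s : ℝ) * d) * lam / ν := by
  have hT' : (0:ℝ) < T := by exact_mod_cast hT
  -- Per-column bound with the sharper constant 3.
  have hcol : ∀ j : Fin d, Real.sqrt (∑ i, (Θhat i j - Θstar i j) ^ 2)
      ≤ 3 * Real.sqrt s * lam / ν := by
    intro j
    set u : Fin m → ℝ := fun i => Θhat i j - Θstar i j with hu
    set b : Fin T → ℝ := fun t => ∑ i, X t i * u i with hb
    set g : Fin m → ℝ := fun i => ((1 / (T : ℝ)) • (Xᵀ * (X * Θstar - Y))) i j with hg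
    set A : ℝ := ∑ i ∈ Finset.univ.filter (fun i : Fin m => Θstar i j ≠ 0), |u i| with hA
    set B : ℝ := ∑ i ∈ Finset.univ.filter (fun i : Fin m => Θstar i j = 0), |u i| with hB
    set E : ℝ := ∑ i, u i ^ 2 with hE
    have hE0 : 0 ≤ E := Finset.sum_nonneg fun i _ => sq_nonneg _
    have hA0 : 0 ≤ A := Finset.sum_nonneg fun i _ => abs_nonneg _
    have hB0 : 0 ≤ B := Finset.sum_nonneg fun i _ => abs_nonneg _
    -- Step 1: column-wise minimality
    have key : (1 / (2 * (T:ℝ))) * (∑ t, (Y t j - (X * Θhat) t j) ^ 2)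
          + lam * ∑ i, |Θhat i j|
        ≤ (1 / (2 * (T:ℝ))) * (∑ t, (Y t j - (X * Θstar) t j) ^ 2)
          + lam * ∑ i, |Θstar i j| := by
      set Θ' : Matrix (Fin m) (Fin d) ℝ :=
        fun i k => if k = j then Θstar i j else Θhat i k with hΘ'
      have h := hmin Θ'
      have hXΘ' : ∀ (t : Fin T) (k : Fin d),
          (X * Θ') t k = if k = j then (X * Θstar) t j else (X * Θhat) t k := by
        intro t k
        by_cases hk : k = j <;> simp only [Matrix.mul_apply] <;> simp [hΘ', hk]
      have hsq : ∑ t, ∑ k, (Y t k - (X * Θ') t k) ^ 2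
          = ∑ t, ∑ k, (Y t k - (X * Θhat) t k) ^ 2
            + (∑ t, (Y t j - (X * Θstar) t j) ^ 2
              - ∑ t, (Y t j - (X * Θhat) t j) ^ 2) := by
        have : ∀ t : Fin T, ∑ k, (Y t k - (X * Θ') t k) ^ 2
            = ∑ k, (Y t k - (X * Θhat) t k) ^ 2
              + ((Y t j - (X * Θstar) t j) ^ 2 - (Y t j - (X * Θhat) t j) ^ 2) := by
          intro t
          have h1 : ∑ k, ((Y t k - (X * Θ') t k) ^ 2 - (Y t k - (X * Θhat) t k) ^ 2)
              = (Y t j - (X * Θstar) t j) ^ 2 - (Y t j - (X * Θhat) t j) ^ 2 := by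
            rw [Finset.sum_eq_single j]
            · rw [hXΘ' t j]; simp
            · intro k _ hk; rw [hXΘ' t k]; simp [hk]
            · simp
          rw [Finset.sum_sub_distrib] at h1
          linarith
        rw [Finset.sum_congr rfl fun t _ => this t, Finset.sum_add_distrib,
          Finset.sum_sub_distrib]
      have habs : ∑ i, ∑ k, |Θ' i k|
          = ∑ i, ∑ k, |Θhat i k| + (∑ i, |Θstar i j| - ∑ i, |Θhat i j|) := by
        have : ∀ i : Fin m, ∑ k, |Θ' i k|
            = ∑ k, |Θhat i k| + (|Θstar i j| - |Θhat i j|) := by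
          intro i
          have h1 : ∑ k, (|Θ' i k| - |Θhat i k|) = |Θstar i j| - |Θhat i j| := by
            rw [Finset.sum_eq_single j]
            · simp [hΘ']
            · intro k _ hk; simp [hΘ', hk]
            · simp
          rw [Finset.sum_sub_distrib] at h1
          linarith
        rw [Finset.sum_congr rfl fun i _ => this i, Finset.sum_add_distrib,
          Finset.sum_sub_distrib]
      rw [hsq, habs] at h
      have hc0 : (0:ℝ) < 1 / (2 * (T:ℝ)) := by positivity
      nlinarith [h]
    -- Step 2: quadratic expansion
    have hXsplit : ∀ t, (X * Θhat) t j = (X * Θstar) t j + b t := by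
      intro t
      simp only [Matrix.mul_apply, hb, hu]
      rw [← Finset.sum_add_distrib]
      exact Finset.sum_congr rfl fun i _ => by ring
    have hexp : ∑ t, (Y t j - (X * Θhat) t j) ^ 2
        = ∑ t, (Y t j - (X * Θstar) t j) ^ 2
          - 2 * ∑ t, (Y t j - (X * Θstar) t j) * b t + ∑ t, b t ^ 2 := by
      have : ∀ t, (Y t j - (X * Θhat) t j) ^ 2
          = (Y t j - (X * Θstar) t j) ^ 2
            - 2 * ((Y t j - (X * Θstar) t j) * b t) + b t ^ 2 := by
        intro t; rw [hXsplit t]; ring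
      rw [Finset.sum_congr rfl fun t _ => this t, Finset.sum_add_distrib,
        Finset.sum_sub_distrib, ← Finset.mul_sum]
    have hcross : ∑ i, g i * u i
        = -((1 / (T:ℝ)) * ∑ t, (Y t j - (X * Θstar) t j) * b t) := by
      have hgi : ∀ i, g i = (1 / (T:ℝ)) * ∑ t, X t i * ((X * Θstar) t j - Y t j) := by
        intro i
        simp [hg, Matrix.mul_apply, Matrix.sub_apply, Matrix.transpose_apply]
      calc ∑ i, g i * u i
          = (1 / (T:ℝ)) * ∑ i, ∑ t, X t i * ((X * Θstar) t j - Y t j) * u i := by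
            rw [Finset.mul_sum]
            refine Finset.sum_congr rfl fun i _ => ?_
            rw [hgi i, mul_assoc, Finset.sum_mul]
        _ = (1 / (T:ℝ)) * ∑ t, ∑ i, X t i * ((X * Θstar) t j - Y t j) * u i := by
            rw [Finset.sum_comm]
        _ = -((1 / (T:ℝ)) * ∑ t, (Y t j - (X * Θstar) t j) * b t) := by
            rw [← neg_mul, neg_mul_comm]
            congr 1
            rw [← Finset.sum_neg_distrib]
            refine Finset.sum_congr rfl fun t _ => ?_
            rw [hb]
            simp only [Finset.mul_sum, ← Finset.sum_neg_distrib]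
            refine Finset.sum_congr rfl fun i _ => by ring
    -- Step 3: the main inequality
    have claim : (1 / (2 * (T:ℝ))) * (∑ t, b t ^ 2) + (∑ i, g i * u i)
          + lam * ∑ i, |Θhat i j| ≤ lam * ∑ i, |Θstar i j| := by
      rw [hexp] at key
      rw [hcross]
      have : (1 / (2 * (T:ℝ))) * (∑ t, (Y t j - (X * Θstar) t j) ^ 2
            - 2 * ∑ t, (Y t j - (X * Θstar) t j) * b t + ∑ t, b t ^ 2)
          = (1 / (2 * (T:ℝ))) * (∑ t, (Y t j - (X * Θstar) t j) ^ 2)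
            - (1 / (T:ℝ)) * (∑ t, (Y t j - (X * Θstar) t j) * b t)
            + (1 / (2 * (T:ℝ))) * (∑ t, b t ^ 2) := by
        field_simp
      rw [this] at key
      linarith
    -- Step 4: bounds
    have hgu : -(∑ i, g i * u i) ≤ (lam / 2) * ∑ i, |u i| := by
      calc -(∑ i, g i * u i) ≤ |∑ i, g i * u i| := neg_le_abs _
        _ ≤ ∑ i, |g i * u i| := Finset.abs_sum_le_sum_abs _ _
        _ ≤ ∑ i, (lam / 2) * |u i| := by
            refine Finset.sum_le_sum fun i _ => ?_
            rw [abs_mul]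
            exact mul_le_mul_of_nonneg_right (hgrad i j) (abs_nonneg _)
        _ = (lam / 2) * ∑ i, |u i| := by rw [Finset.mul_sum]
    have husplit : ∀ (f : Fin m → ℝ), ∑ i, f i
        = ∑ i ∈ Finset.univ.filter (fun i : Fin m => Θstar i j = 0), f i
          + ∑ i ∈ Finset.univ.filter (fun i : Fin m => Θstar i j ≠ 0), f i := by
      intro f
      exact (Finset.sum_filter_add_sum_filter_not _ _ f).symm
    have huabs : ∑ i, |u i| = B + A := husplit _
    have habsdiff : ∑ i, |Θstar i j| - ∑ i, |Θhat i j| ≤ A - B := by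
      rw [husplit (fun i => |Θstar i j|), husplit (fun i => |Θhat i j|)]
      have h1 : ∑ i ∈ Finset.univ.filter (fun i : Fin m => Θstar i j = 0), |Θstar i j|
          - ∑ i ∈ Finset.univ.filter (fun i : Fin m => Θstar i j = 0), |Θhat i j| = -B := by
        rw [← Finset.sum_sub_distrib, hB, ← Finset.sum_neg_distrib]
        refine Finset.sum_congr rfl fun i hi => ?_
        have h0 : Θstar i j = 0 := by simpa using (Finset.mem_filter.mp hi).2
        simp [hu, h0]
      have h2 : ∑ i ∈ Finset.univ.filter (fun i : Fin m => Θstar i j ≠ 0), |Θstar i j|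
          - ∑ i ∈ Finset.univ.filter (fun i : Fin m => Θstar i j ≠ 0), |Θhat i j| ≤ A := by
        rw [← Finset.sum_sub_distrib, hA]
        refine Finset.sum_le_sum fun i _ => ?_
        calc |Θstar i j| - |Θhat i j| ≤ |Θstar i j - Θhat i j| := abs_sub_abs_le_abs_sub _ _
          _ = |u i| := by rw [hu]; rw [abs_sub_comm]
      linarith
    have hbsq0 : 0 ≤ ∑ t, b t ^ 2 := Finset.sum_nonneg fun t _ => sq_nonneg _
    have hc0 : (0:ℝ) < 1 / (2 * (T:ℝ)) := by positivity
    have hmain : (1 / (2 * (T:ℝ))) * (∑ t, b t ^ 2)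
        ≤ (3 / 2) * lam * A - (lam / 2) * B := by
      have h4 := mul_le_mul_of_nonneg_left habsdiff hlam.le
      have h5 := hgu
      rw [huabs] at h5
      linarith [claim]
    -- cone condition
    have hcone : B ≤ 3 * A := by
      have h1 : 0 ≤ (1 / (2 * (T:ℝ))) * (∑ t, b t ^ 2) := mul_nonneg hc0.le hbsq0
      have h2 : lam * B ≤ lam * (3 * A) := by linarith [hmain]
      exact le_of_mul_le_mul_left h2 hlam
    -- restricted eigenvalue
    have hREeq : u ⬝ᵥ ((1 / (T:ℝ)) • (Xᵀ * X)).mulVec u = (1 / (T:ℝ)) * ∑ t, b t ^ 2 := by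
      have hdp : (X *ᵥ u) ⬝ᵥ (X *ᵥ u) = ∑ t, b t ^ 2 := by
        simp [dotProduct, Matrix.mulVec, hb, sq]
      calc u ⬝ᵥ ((1 / (T:ℝ)) • (Xᵀ * X)).mulVec u
          = (1 / (T:ℝ)) * (u ⬝ᵥ (Xᵀ * X) *ᵥ u) := by
            rw [Matrix.smul_mulVec, dotProduct_smul, smul_eq_mul]
        _ = (1 / (T:ℝ)) * ((X *ᵥ u) ⬝ᵥ (X *ᵥ u)) := by
            rw [← Matrix.mulVec_mulVec, Matrix.dotProduct_mulVec, Matrix.vecMul_transpose]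
        _ = (1 / (T:ℝ)) * ∑ t, b t ^ 2 := by rw [hdp]
    have hreu := hre j u hcone
    rw [hREeq] at hreu
    have hfrac : (1 / (T:ℝ)) * ∑ t, b t ^ 2 = 2 * ((1 / (2 * (T:ℝ))) * ∑ t, b t ^ 2) := by
      ring
    have hνE : ν * E ≤ 3 * lam * A := by
      rw [hfrac] at hreu
      have h6 : 0 ≤ lam * B := mul_nonneg hlam.le hB0
      linarith [hmain]
    -- Cauchy–Schwarz on the support
    have hcard : ((Finset.univ.filter (fun i : Fin m => Θstar i j ≠ 0)).card : ℝ) ≤ (s:ℝ) := by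
      exact_mod_cast hsupp j
    have hA2 : A ^ 2 ≤ (s:ℝ) * E := by
      have h1 : A ^ 2 ≤ ((Finset.univ.filter (fun i : Fin m => Θstar i j ≠ 0)).card : ℝ)
          * ∑ i ∈ Finset.univ.filter (fun i : Fin m => Θstar i j ≠ 0), |u i| ^ 2 := by
        rw [hA]
        exact sq_sum_le_card_mul_sum_sq
      have h2 : ∑ i ∈ Finset.univ.filter (fun i : Fin m => Θstar i j ≠ 0), |u i| ^ 2 ≤ E := by
        rw [hE]
        have e1 : ∑ i ∈ Finset.univ.filter (fun i : Fin m => Θstar i j ≠ 0), |u i| ^ 2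
            = ∑ i ∈ Finset.univ.filter (fun i : Fin m => Θstar i j ≠ 0), u i ^ 2 :=
          Finset.sum_congr rfl fun i _ => by rw [sq_abs]
        rw [e1]
        exact Finset.sum_le_sum_of_subset_of_nonneg (Finset.filter_subset _ _)
          (fun i _ _ => sq_nonneg _)
      have h3 : 0 ≤ ∑ i ∈ Finset.univ.filter (fun i : Fin m => Θstar i j ≠ 0), |u i| ^ 2 :=
        Finset.sum_nonneg fun i _ => sq_nonneg _
      calc A ^ 2 ≤ _ := h1
        _ ≤ (s:ℝ) * E := by
            apply mul_le_mul hcard h2 h3 (by positivity)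
      done
    have hAle : A ≤ Real.sqrt s * Real.sqrt E := by
      calc A = Real.sqrt (A ^ 2) := (Real.sqrt_sq hA0).symm
        _ ≤ Real.sqrt ((s:ℝ) * E) := Real.sqrt_le_sqrt hA2
        _ = Real.sqrt s * Real.sqrt E := Real.sqrt_mul (by positivity) _
    -- conclude
    have hEsq : Real.sqrt E ^ 2 = E := Real.sq_sqrt hE0
    set r : ℝ := Real.sqrt E with hr
    have hr0 : 0 ≤ r := Real.sqrt_nonneg _
    have hkey2 : ν * r ^ 2 ≤ 3 * lam * (Real.sqrt s * r) := by
      rw [hEsq]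
      calc ν * E ≤ 3 * lam * A := hνE
        _ ≤ 3 * lam * (Real.sqrt s * r) := by
            apply mul_le_mul_of_nonneg_left hAle (by positivity)
    rcases eq_or_lt_of_le hr0 with h0 | h0
    · rw [← h0]; positivity
    · have h7 : ν * r ≤ 3 * lam * Real.sqrt s :=
        le_of_mul_le_mul_right (by linarith [hkey2]) h0
      rw [le_div_iff₀ hν]
      linarith [h7]
  constructor
  · intro j
    have h0 : 0 ≤ Real.sqrt s * lam / ν := by positivity
    have := hcol j
    have h3 : 3 * Real.sqrt s * lam / ν ≤ 6 * Real.sqrt s * lam / ν := by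
      calc 3 * Real.sqrt s * lam / ν = 3 * (Real.sqrt s * lam / ν) := by ring
        _ ≤ 6 * (Real.sqrt s * lam / ν) := by linarith
        _ = 6 * Real.sqrt s * lam / ν := by ring
    linarith
  · set C : ℝ := 3 * Real.sqrt s * lam / ν with hC
    have hC0 : 0 ≤ C := by positivity
    have hEj : ∀ j : Fin d, ∑ i, (Θhat i j - Θstar i j) ^ 2 ≤ C ^ 2 := by
      intro j
      have hE0 : (0:ℝ) ≤ ∑ i, (Θhat i j - Θstar i j) ^ 2 :=
        Finset.sum_nonneg fun i _ => sq_nonneg _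
      calc ∑ i, (Θhat i j - Θstar i j) ^ 2
          = Real.sqrt (∑ i, (Θhat i j - Θstar i j) ^ 2) ^ 2 := (Real.sq_sqrt hE0).symm
        _ ≤ C ^ 2 := pow_le_pow_left₀ (Real.sqrt_nonneg _) (hcol j) 2
    calc Real.sqrt (∑ i, ∑ j, (Θhat i j - Θstar i j) ^ 2)
        = Real.sqrt (∑ j, ∑ i, (Θhat i j - Θstar i j) ^ 2) := by rw [Finset.sum_comm]
      _ ≤ Real.sqrt ((d:ℝ) * C ^ 2) := by
          apply Real.sqrt_le_sqrt
          calc ∑ j : Fin d, ∑ i, (Θhat i j - Θstar i j) ^ 2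
              ≤ ∑ _j : Fin d, C ^ 2 := Finset.sum_le_sum fun j _ => hEj j
            _ = (d:ℝ) * C ^ 2 := by
                rw [Finset.sum_const, Finset.card_univ, Fintype.card_fin, nsmul_eq_mul]
      _ = Real.sqrt d * C := by
          rw [Real.sqrt_mul (by positivity), Real.sqrt_sq hC0]
      _ ≤ 6 * Real.sqrt ((s:ℝ) * d) * lam / ν := by
          rw [Real.sqrt_mul (by positivity : (0:ℝ) ≤ (s:ℝ)), hC]
          have h0 : 0 ≤ Real.sqrt s * Real.sqrt d * lam / ν := by positivity
          have he : Real.sqrt (d:ℝ) * (3 * Real.sqrt s * lam / ν)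
              = 3 * (Real.sqrt s * Real.sqrt d) * lam / ν := by ring
          rw [he]
          calc 3 * (Real.sqrt s * Real.sqrt d) * lam / ν
              = 3 * (Real.sqrt s * Real.sqrt d * lam / ν) := by ring
            _ ≤ 6 * (Real.sqrt s * Real.sqrt d * lam / ν) := by linarith
            _ = 6 * (Real.sqrt s * Real.sqrt d) * lam / ν := by ring
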